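/- arXiv:2001.10921 — 2 statements merged into one kernel-verified Lean document; each statement's English description precedes it below -/
import Mathlib

section
/- Let n, p, q, m be natural numbers. Let φ : ℝ^n → ℝ^q, ψ : ℝ^n → ℝ^p, δ : ℝ^n → ℝ^m be differentiable near α₀ ∈ ℝ^n, let F : ℝ^p × ℝ^q → ℝ^p and B : ℝ^m × ℝ^p × ℝ^q × ℝ^n → ℝ^m be continuously differentiable with F(ψ(α), φ(α)) = 0 and B(δ(α), ψ(α), φ(α), α) = 0 for all α near α₀, and let J : ℝ^m × ℝ^p × ℝ^q × ℝ^n → ℝ be differentiable. Write P₀ = (δ(α₀), ψ(α₀), φ(α₀), α₀), and assume the partial Jacobians M = [∂F/∂c_I](ψ(α₀), φ(α₀)) ∈ ℝ^{p×p} and K = [∂B/∂d](P₀) ∈ ℝ^{m×m} are invertible. Define the vectors a = K^{-T} ∇_d J(P₀), b_I = −[∂B/∂c_I](P₀)^T a + ∇_{c_I} J(P₀), b_B = −[∂B/∂c_B](P₀)^T a + ∇_{c_B} J(P₀), e = M^{-T} b_I, and q = −[∂F/∂c_B](ψ(α₀), φ(α₀))^T e + b_B. Then the gradient of the reduced objective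 j(α) = J(δ(α), ψ(α), φ(α), α) at α₀ equals ∇j(α₀) = Dφ(α₀)^T q − [∂B/∂α](P₀)^T a + ∇_α J(P₀). -/
open Matrix

/-- The Jacobian matrix of a map between finite-dimensional real coordinate
spaces, identified with a matrix via the standard bases. -/
noncomputable def jac {n m : ℕ} (f : (Fin n → ℝ) → (Fin m → ℝ)) (x : Fin n → ℝ) :
    Matrix (Fin m) (Fin n) ℝ :=
  LinearMap.toMatrix' (fderiv ℝ f x).toLinearMap

/-- The gradient (transposed derivative) of a scalar function on a
finite-dimensional real coordinate space, identified with a vector via the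
standard basis. -/
noncomputable def grad {n : ℕ} (f : (Fin n → ℝ) → ℝ) (x : Fin n → ℝ) : Fin n → ℝ :=
  fun i => fderiv ℝ f x (Pi.single i 1)


lemma jac_mulVec {n m : ℕ} (f : (Fin n → ℝ) → (Fin m → ℝ)) (x v : Fin n → ℝ) :
    (jac f x).mulVec v = fderiv ℝ f x v := by
  unfold jac
  rw [← Matrix.toLin'_apply, Matrix.toLin'_toMatrix']
  rfl

lemma dot_grad {k : ℕ} (f : (Fin k → ℝ) → ℝ) (x v : Fin k → ℝ) :
    grad f x ⬝ᵥ v = fderiv ℝ f x v := by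
  have hv : v = ∑ i, v i • (Pi.single i 1 : Fin k → ℝ) := by
    ext j; simp [Pi.single_apply]
  conv_rhs => rw [hv]
  rw [map_sum]
  simp [dotProduct, grad, mul_comm]

lemma tmulVec {r s : ℕ} (N : Matrix (Fin r) (Fin s) ℝ) (w : Fin r → ℝ) (k : Fin s) :
    Nᵀ.mulVec w k = w ⬝ᵥ N.mulVec (Pi.single k 1) := by
  simp [Matrix.mulVec, dotProduct, Pi.single_apply, mul_comm]

/-- Adjoint-based gradient formula (paper eqs. (25) and (27)–(29)) for the
reduced objective `j α = J (δ α, ψ α, φ α, α)`, where `δ` is defined implicitly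
by the state residual `B = 0` and `ψ` by the elliptic-grid-generation residual
`F = 0`. -/
theorem stmt2 (n p q m : ℕ)
    (φ : (Fin n → ℝ) → (Fin q → ℝ))
    (ψ : (Fin n → ℝ) → (Fin p → ℝ))
    (δ : (Fin n → ℝ) → (Fin m → ℝ))
    (α₀ : Fin n → ℝ)
    (hφ : ∀ᶠ α in nhds α₀, DifferentiableAt ℝ φ α)
    (hψ : ∀ᶠ α in nhds α₀, DifferentiableAt ℝ ψ α)
    (hδ : ∀ᶠ α in nhds α₀, DifferentiableAt ℝ δ α)
    (F : (Fin p → ℝ) × (Fin q → ℝ) → (Fin p → ℝ))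
    (B : (Fin m → ℝ) × (Fin p → ℝ) × (Fin q → ℝ) × (Fin n → ℝ) → (Fin m → ℝ))
    (hF : ContDiff ℝ 1 F)
    (hB : ContDiff ℝ 1 B)
    (hFeq : ∀ᶠ α in nhds α₀, F (ψ α, φ α) = 0)
    (hBeq : ∀ᶠ α in nhds α₀, B (δ α, ψ α, φ α, α) = 0)
    (J : (Fin m → ℝ) × (Fin p → ℝ) × (Fin q → ℝ) × (Fin n → ℝ) → ℝ)
    (hJ : Differentiable ℝ J)
    (M : Matrix (Fin p) (Fin p) ℝ)
    (hM : M = jac (fun c => F (c, φ α₀)) (ψ α₀))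
    (hMinv : IsUnit M)
    (K : Matrix (Fin m) (Fin m) ℝ)
    (hK : K = jac (fun d => B (d, ψ α₀, φ α₀, α₀)) (δ α₀))
    (hKinv : IsUnit K)
    (a : Fin m → ℝ)
    (ha : a = ((Kᵀ)⁻¹).mulVec (grad (fun d => J (d, ψ α₀, φ α₀, α₀)) (δ α₀)))
    (bI : Fin p → ℝ)
    (hbI : bI = -((jac (fun c => B (δ α₀, c, φ α₀, α₀)) (ψ α₀))ᵀ.mulVec a) +
                  grad (fun c => J (δ α₀, c, φ α₀, α₀)) (ψ α₀))
    (bB : Fin q → ℝ)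
    (hbB : bB = -((jac (fun b => B (δ α₀, ψ α₀, b, α₀)) (φ α₀))ᵀ.mulVec a) +
                  grad (fun b => J (δ α₀, ψ α₀, b, α₀)) (φ α₀))
    (e : Fin p → ℝ)
    (he : e = ((Mᵀ)⁻¹).mulVec bI)
    (qv : Fin q → ℝ)
    (hqv : qv = -((jac (fun b => F (ψ α₀, b)) (φ α₀))ᵀ.mulVec e) + bB) :
    grad (fun α => J (δ α, ψ α, φ α, α)) α₀ =
      (jac φ α₀)ᵀ.mulVec qv -
        (jac (fun β => B (δ α₀, ψ α₀, φ α₀, β)) α₀)ᵀ.mulVec a +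
        grad (fun β => J (δ α₀, ψ α₀, φ α₀, β)) α₀ := by
  -- basic differentiability facts
  have hφ0 : DifferentiableAt ℝ φ α₀ := hφ.self_of_nhds
  have hψ0 : DifferentiableAt ℝ ψ α₀ := hψ.self_of_nhds
  have hδ0 : DifferentiableAt ℝ δ α₀ := hδ.self_of_nhds
  have hFd : Differentiable ℝ F := hF.differentiable one_ne_zero
  have hBd : Differentiable ℝ B := hB.differentiable one_ne_zero
  set Pt : (Fin m → ℝ) × (Fin p → ℝ) × (Fin q → ℝ) × (Fin n → ℝ) :=
    (δ α₀, ψ α₀, φ α₀, α₀) with hPt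
  set LJ := fderiv ℝ J Pt with hLJdef
  set LF := fderiv ℝ F (ψ α₀, φ α₀) with hLFdef
  set LB := fderiv ℝ B Pt with hLBdef
  set Dδ := fderiv ℝ δ α₀ with hDδdef
  set Dψ := fderiv ℝ ψ α₀ with hDψdef
  set Dφ := fderiv ℝ φ α₀ with hDφdef
  -- derivatives of the coordinate embeddings
  have hEd : HasFDerivAt (fun d : Fin m → ℝ => (d, ψ α₀, φ α₀, α₀))
      ((ContinuousLinearMap.id ℝ (Fin m → ℝ)).prod 0) (δ α₀) :=
    (hasFDerivAt_id _).prodMk (hasFDerivAt_const _ _)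
  have hEi : HasFDerivAt (fun c : Fin p → ℝ => (δ α₀, c, φ α₀, α₀))
      ((0 : (Fin p → ℝ) →L[ℝ] (Fin m → ℝ)).prod
        ((ContinuousLinearMap.id ℝ (Fin p → ℝ)).prod 0)) (ψ α₀) :=
    (hasFDerivAt_const _ _).prodMk ((hasFDerivAt_id _).prodMk (hasFDerivAt_const _ _))
  have hEb : HasFDerivAt (fun b : Fin q → ℝ => (δ α₀, ψ α₀, b, α₀))
      ((0 : (Fin q → ℝ) →L[ℝ] (Fin m → ℝ)).prod
        ((0 : (Fin q → ℝ) →L[ℝ] (Fin p → ℝ)).prod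
          ((ContinuousLinearMap.id ℝ (Fin q → ℝ)).prod 0))) (φ α₀) :=
    (hasFDerivAt_const _ _).prodMk
      ((hasFDerivAt_const _ _).prodMk ((hasFDerivAt_id _).prodMk (hasFDerivAt_const _ _)))
  have hEa : HasFDerivAt (fun β : Fin n → ℝ => (δ α₀, ψ α₀, φ α₀, β))
      ((0 : (Fin n → ℝ) →L[ℝ] (Fin m → ℝ)).prod
        ((0 : (Fin n → ℝ) →L[ℝ] (Fin p → ℝ)).prod
          ((0 : (Fin n → ℝ) →L[ℝ] (Fin q → ℝ)).prod (ContinuousLinearMap.id ℝ _)))) α₀ :=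
    (hasFDerivAt_const _ _).prodMk
      ((hasFDerivAt_const _ _).prodMk ((hasFDerivAt_const _ _).prodMk (hasFDerivAt_id _)))
  have hEM : HasFDerivAt (fun c : Fin p → ℝ => (c, φ α₀))
      ((ContinuousLinearMap.id ℝ (Fin p → ℝ)).prod 0) (ψ α₀) :=
    (hasFDerivAt_id _).prodMk (hasFDerivAt_const _ _)
  have hEF : HasFDerivAt (fun b : Fin q → ℝ => (ψ α₀, b))
      ((0 : (Fin q → ℝ) →L[ℝ] (Fin p → ℝ)).prod (ContinuousLinearMap.id ℝ _)) (φ α₀) :=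
    (hasFDerivAt_const _ _).prodMk (hasFDerivAt_id _)
  -- partial-jacobian actions
  have hKw : ∀ w, K.mulVec w = LB (w, 0, 0, 0) := by
    intro w
    have h : HasFDerivAt (fun d => B (d, ψ α₀, φ α₀, α₀))
        (LB.comp ((ContinuousLinearMap.id ℝ (Fin m → ℝ)).prod 0)) (δ α₀) :=
      (hBd Pt).hasFDerivAt.comp (δ α₀) hEd
    rw [hK, jac_mulVec, h.fderiv]; rfl
  have hBIw : ∀ w, (jac (fun c => B (δ α₀, c, φ α₀, α₀)) (ψ α₀)).mulVec w = LB (0, w, 0, 0) := by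
    intro w
    have h : HasFDerivAt (fun c => B (δ α₀, c, φ α₀, α₀))
        (LB.comp ((0 : (Fin p → ℝ) →L[ℝ] (Fin m → ℝ)).prod
          ((ContinuousLinearMap.id ℝ (Fin p → ℝ)).prod 0))) (ψ α₀) :=
      (hBd Pt).hasFDerivAt.comp (ψ α₀) hEi
    rw [jac_mulVec, h.fderiv]; rfl
  have hBBw : ∀ w, (jac (fun b => B (δ α₀, ψ α₀, b, α₀)) (φ α₀)).mulVec w = LB (0, 0, w, 0) := by
    intro w
    have h : HasFDerivAt (fun b => B (δ α₀, ψ α₀, b, α₀))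
        (LB.comp ((0 : (Fin q → ℝ) →L[ℝ] (Fin m → ℝ)).prod
          ((0 : (Fin q → ℝ) →L[ℝ] (Fin p → ℝ)).prod
            ((ContinuousLinearMap.id ℝ (Fin q → ℝ)).prod 0)))) (φ α₀) :=
      (hBd Pt).hasFDerivAt.comp (φ α₀) hEb
    rw [jac_mulVec, h.fderiv]; rfl
  have hBaw : ∀ w, (jac (fun β => B (δ α₀, ψ α₀, φ α₀, β)) α₀).mulVec w = LB (0, 0, 0, w) := by
    intro w
    have h : HasFDerivAt (fun β => B (δ α₀, ψ α₀, φ α₀, β))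
        (LB.comp ((0 : (Fin n → ℝ) →L[ℝ] (Fin m → ℝ)).prod
          ((0 : (Fin n → ℝ) →L[ℝ] (Fin p → ℝ)).prod
            ((0 : (Fin n → ℝ) →L[ℝ] (Fin q → ℝ)).prod (ContinuousLinearMap.id ℝ _))))) α₀ :=
      (hBd Pt).hasFDerivAt.comp α₀ hEa
    rw [jac_mulVec, h.fderiv]; rfl
  have hMw : ∀ w, M.mulVec w = LF (w, 0) := by
    intro w
    have h : HasFDerivAt (fun c => F (c, φ α₀))
        (LF.comp ((ContinuousLinearMap.id ℝ (Fin p → ℝ)).prod 0)) (ψ α₀) :=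
      (hFd _).hasFDerivAt.comp (ψ α₀) hEM
    rw [hM, jac_mulVec, h.fderiv]; rfl
  have hFBw : ∀ w, (jac (fun b => F (ψ α₀, b)) (φ α₀)).mulVec w = LF (0, w) := by
    intro w
    have h : HasFDerivAt (fun b => F (ψ α₀, b))
        (LF.comp ((0 : (Fin q → ℝ) →L[ℝ] (Fin p → ℝ)).prod (ContinuousLinearMap.id ℝ _))) (φ α₀) :=
      (hFd _).hasFDerivAt.comp (φ α₀) hEF
    rw [jac_mulVec, h.fderiv]; rfl
  -- partial gradients of J
  have hgd : ∀ w, grad (fun d => J (d, ψ α₀, φ α₀, α₀)) (δ α₀) ⬝ᵥ w = LJ (w, 0, 0, 0) := by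
    intro w
    have h : HasFDerivAt (fun d => J (d, ψ α₀, φ α₀, α₀))
        (LJ.comp ((ContinuousLinearMap.id ℝ (Fin m → ℝ)).prod 0)) (δ α₀) :=
      (hJ Pt).hasFDerivAt.comp (δ α₀) hEd
    rw [dot_grad, h.fderiv]; rfl
  have hgI : ∀ w, grad (fun c => J (δ α₀, c, φ α₀, α₀)) (ψ α₀) ⬝ᵥ w = LJ (0, w, 0, 0) := by
    intro w
    have h : HasFDerivAt (fun c => J (δ α₀, c, φ α₀, α₀))
        (LJ.comp ((0 : (Fin p → ℝ) →L[ℝ] (Fin m → ℝ)).prod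
          ((ContinuousLinearMap.id ℝ (Fin p → ℝ)).prod 0))) (ψ α₀) :=
      (hJ Pt).hasFDerivAt.comp (ψ α₀) hEi
    rw [dot_grad, h.fderiv]; rfl
  have hgB : ∀ w, grad (fun b => J (δ α₀, ψ α₀, b, α₀)) (φ α₀) ⬝ᵥ w = LJ (0, 0, w, 0) := by
    intro w
    have h : HasFDerivAt (fun b => J (δ α₀, ψ α₀, b, α₀))
        (LJ.comp ((0 : (Fin q → ℝ) →L[ℝ] (Fin m → ℝ)).prod
          ((0 : (Fin q → ℝ) →L[ℝ] (Fin p → ℝ)).prod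
            ((ContinuousLinearMap.id ℝ (Fin q → ℝ)).prod 0)))) (φ α₀) :=
      (hJ Pt).hasFDerivAt.comp (φ α₀) hEb
    rw [dot_grad, h.fderiv]; rfl
  have hgα : ∀ w, fderiv ℝ (fun β => J (δ α₀, ψ α₀, φ α₀, β)) α₀ w = LJ (0, 0, 0, w) := by
    intro w
    have h : HasFDerivAt (fun β => J (δ α₀, ψ α₀, φ α₀, β))
        (LJ.comp ((0 : (Fin n → ℝ) →L[ℝ] (Fin m → ℝ)).prod
          ((0 : (Fin n → ℝ) →L[ℝ] (Fin p → ℝ)).prod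
            ((0 : (Fin n → ℝ) →L[ℝ] (Fin q → ℝ)).prod (ContinuousLinearMap.id ℝ _))))) α₀ :=
      (hJ Pt).hasFDerivAt.comp α₀ hEa
    rw [h.fderiv]; rfl
  -- splitting lemmas
  have hsplitJ : ∀ (x : Fin m → ℝ) (y : Fin p → ℝ) (z : Fin q → ℝ) (t : Fin n → ℝ),
      LJ (x, y, z, t) = LJ (x, 0, 0, 0) + LJ (0, y, 0, 0) + LJ (0, 0, z, 0) + LJ (0, 0, 0, t) := by
    intro x y z t
    have hx : ((x, y, z, t) : (Fin m → ℝ) × (Fin p → ℝ) × (Fin q → ℝ) × (Fin n → ℝ)) =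
        (x, 0, 0, 0) + (0, y, 0, 0) + (0, 0, z, 0) + (0, 0, 0, t) := by
      simp [Prod.ext_iff]
    rw [hx, map_add, map_add, map_add]
  have hsplitB : ∀ (x : Fin m → ℝ) (y : Fin p → ℝ) (z : Fin q → ℝ) (t : Fin n → ℝ),
      LB (x, y, z, t) = LB (x, 0, 0, 0) + LB (0, y, 0, 0) + LB (0, 0, z, 0) + LB (0, 0, 0, t) := by
    intro x y z t
    have hx : ((x, y, z, t) : (Fin m → ℝ) × (Fin p → ℝ) × (Fin q → ℝ) × (Fin n → ℝ)) =
        (x, 0, 0, 0) + (0, y, 0, 0) + (0, 0, z, 0) + (0, 0, 0, t) := by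
      simp [Prod.ext_iff]
    rw [hx, map_add, map_add, map_add]
  have hsplitF : ∀ (x : Fin p → ℝ) (y : Fin q → ℝ),
      LF (x, y) = LF (x, 0) + LF (0, y) := by
    intro x y
    have hx : ((x, y) : (Fin p → ℝ) × (Fin q → ℝ)) = (x, 0) + (0, y) := by
      simp [Prod.ext_iff]
    rw [hx, map_add]
  -- adjoint equations
  have hKa : Kᵀ.mulVec a = grad (fun d => J (d, ψ α₀, φ α₀, α₀)) (δ α₀) := by
    rw [ha, Matrix.mulVec_mulVec, Matrix.mul_nonsing_inv, Matrix.one_mulVec]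
    rw [Matrix.det_transpose]
    exact (Matrix.isUnit_iff_isUnit_det K).mp hKinv
  have hMe : Mᵀ.mulVec e = bI := by
    rw [he, Matrix.mulVec_mulVec, Matrix.mul_nonsing_inv, Matrix.one_mulVec]
    rw [Matrix.det_transpose]
    exact (Matrix.isUnit_iff_isUnit_det M).mp hMinv
  -- constraint derivatives vanish
  have hFz : ∀ v, LF (Dψ v, Dφ v) = 0 := by
    intro v
    have h : HasFDerivAt (fun α => F (ψ α, φ α)) (LF.comp (Dψ.prod Dφ)) α₀ :=
      (hFd _).hasFDerivAt.comp _ (hψ0.hasFDerivAt.prodMk hφ0.hasFDerivAt)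
    have h0 : fderiv ℝ (fun α => F (ψ α, φ α)) α₀ = 0 := by
      rw [Filter.EventuallyEq.fderiv_eq
        (hFeq : (fun α => F (ψ α, φ α)) =ᶠ[nhds α₀] fun _ => 0)]
      exact fderiv_const_apply 0
    calc LF (Dψ v, Dφ v) = (LF.comp (Dψ.prod Dφ)) v := rfl
      _ = 0 := by rw [← h.fderiv, h0]; rfl
  have hBz : ∀ v, LB (Dδ v, Dψ v, Dφ v, v) = 0 := by
    intro v
    have h : HasFDerivAt (fun α => B (δ α, ψ α, φ α, α))
        (LB.comp (Dδ.prod (Dψ.prod (Dφ.prod (ContinuousLinearMap.id ℝ _))))) α₀ :=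
      (hBd Pt).hasFDerivAt.comp α₀
        (hδ0.hasFDerivAt.prodMk (hψ0.hasFDerivAt.prodMk (hφ0.hasFDerivAt.prodMk (hasFDerivAt_id _))))
    have h0 : fderiv ℝ (fun α => B (δ α, ψ α, φ α, α)) α₀ = 0 := by
      rw [Filter.EventuallyEq.fderiv_eq
        (hBeq : (fun α => B (δ α, ψ α, φ α, α)) =ᶠ[nhds α₀] fun _ => 0)]
      exact fderiv_const_apply 0
    calc LB (Dδ v, Dψ v, Dφ v, v)
        = (LB.comp (Dδ.prod (Dψ.prod (Dφ.prod (ContinuousLinearMap.id ℝ _))))) v := rfl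
      _ = 0 := by rw [← h.fderiv, h0]; rfl
  -- the main computation, entrywise
  funext k
  set u : Fin n → ℝ := Pi.single k 1 with hu
  set wd := Dδ u with hwd
  set wi := Dψ u with hwi
  set wb := Dφ u with hwb
  -- LHS
  have hDG : HasFDerivAt (fun α => J (δ α, ψ α, φ α, α))
      (LJ.comp (Dδ.prod (Dψ.prod (Dφ.prod (ContinuousLinearMap.id ℝ _))))) α₀ :=
    (hJ Pt).hasFDerivAt.comp α₀
      (hδ0.hasFDerivAt.prodMk (hψ0.hasFDerivAt.prodMk (hφ0.hasFDerivAt.prodMk (hasFDerivAt_id _))))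
  have hLHS : grad (fun α => J (δ α, ψ α, φ α, α)) α₀ k = LJ (wd, wi, wb, u) := by
    show fderiv ℝ (fun α => J (δ α, ψ α, φ α, α)) α₀ u = _
    rw [hDG.fderiv]; rfl
  -- RHS pieces
  have hR1 : (jac φ α₀)ᵀ.mulVec qv k = qv ⬝ᵥ wb := by
    rw [tmulVec, jac_mulVec]
  have hR2 : (jac (fun β => B (δ α₀, ψ α₀, φ α₀, β)) α₀)ᵀ.mulVec a k = a ⬝ᵥ LB (0, 0, 0, u) := by
    rw [tmulVec, hBaw]
  have hR3 : grad (fun β => J (δ α₀, ψ α₀, φ α₀, β)) α₀ k = LJ (0, 0, 0, u) := by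
    show fderiv ℝ (fun β => J (δ α₀, ψ α₀, φ α₀, β)) α₀ u = _
    rw [hgα]
  -- scalar equations
  have hdotK : ∀ w, a ⬝ᵥ K.mulVec w = grad (fun d => J (d, ψ α₀, φ α₀, α₀)) (δ α₀) ⬝ᵥ w := by
    intro w; rw [Matrix.dotProduct_mulVec, ← Matrix.mulVec_transpose, hKa]
  have hdotM : ∀ w, e ⬝ᵥ M.mulVec w = bI ⬝ᵥ w := by
    intro w; rw [Matrix.dotProduct_mulVec, ← Matrix.mulVec_transpose, hMe]
  have E2 : LJ (wd, 0, 0, 0) = a ⬝ᵥ LB (wd, 0, 0, 0) := by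
    rw [← hgd wd, ← hdotK wd, hKw]
  have E3 : a ⬝ᵥ LB (wd, 0, 0, 0) + a ⬝ᵥ LB (0, wi, 0, 0) + a ⬝ᵥ LB (0, 0, wb, 0)
      + a ⬝ᵥ LB (0, 0, 0, u) = 0 := by
    have h := hBz u
    rw [hsplitB] at h
    calc a ⬝ᵥ LB (wd, 0, 0, 0) + a ⬝ᵥ LB (0, wi, 0, 0) + a ⬝ᵥ LB (0, 0, wb, 0)
          + a ⬝ᵥ LB (0, 0, 0, u)
        = a ⬝ᵥ (LB (wd, 0, 0, 0) + LB (0, wi, 0, 0) + LB (0, 0, wb, 0) + LB (0, 0, 0, u)) := by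
          simp [dotProduct_add]
      _ = a ⬝ᵥ (0 : Fin m → ℝ) := by rw [h]
      _ = 0 := dotProduct_zero a
  have E4 : bI ⬝ᵥ wi = -(a ⬝ᵥ LB (0, wi, 0, 0)) + LJ (0, wi, 0, 0) := by
    rw [hbI, add_dotProduct, neg_dotProduct, hgI]
    congr 2
    rw [← hBIw wi, Matrix.dotProduct_mulVec, ← Matrix.mulVec_transpose]
  have E5 : bI ⬝ᵥ wi = e ⬝ᵥ LF (wi, 0) := by
    rw [← hdotM wi, hMw]
  have E6 : e ⬝ᵥ LF (wi, 0) + e ⬝ᵥ LF (0, wb) = 0 := by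
    have h := hFz u
    rw [hsplitF] at h
    calc e ⬝ᵥ LF (wi, 0) + e ⬝ᵥ LF (0, wb)
        = e ⬝ᵥ (LF (wi, 0) + LF (0, wb)) := by simp [dotProduct_add]
      _ = e ⬝ᵥ (0 : Fin p → ℝ) := by rw [h]
      _ = 0 := dotProduct_zero e
  have E7 : (jac (fun b => F (ψ α₀, b)) (φ α₀))ᵀ.mulVec e ⬝ᵥ wb = e ⬝ᵥ LF (0, wb) := by
    rw [← hFBw wb, Matrix.dotProduct_mulVec, ← Matrix.mulVec_transpose]
  have E8 : bB ⬝ᵥ wb = -(a ⬝ᵥ LB (0, 0, wb, 0)) + LJ (0, 0, wb, 0) := by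
    rw [hbB, add_dotProduct, neg_dotProduct, hgB]
    congr 2
    rw [← hBBw wb, Matrix.dotProduct_mulVec, ← Matrix.mulVec_transpose]
  have E9 : qv ⬝ᵥ wb = -(e ⬝ᵥ LF (0, wb)) + bB ⬝ᵥ wb := by
    rw [hqv, add_dotProduct, neg_dotProduct, E7]
  -- put everything together
  have hgoal : ((jac φ α₀)ᵀ.mulVec qv -
      (jac (fun β => B (δ α₀, ψ α₀, φ α₀, β)) α₀)ᵀ.mulVec a +
      grad (fun β => J (δ α₀, ψ α₀, φ α₀, β)) α₀) k
      = qv ⬝ᵥ wb - a ⬝ᵥ LB (0, 0, 0, u) + LJ (0, 0, 0, u) := by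
    simp only [Pi.add_apply, Pi.sub_apply, hR1, hR2, hR3]
  rw [hLHS, hgoal, hsplitJ]
  linarith [E2, E3, E4, E5, E6, E8, E9]
end

section
/- Let U and V be open subsets of ℝ², and let x : U → V be a bijective, twice continuously differentiable map whose Jacobian determinant is nonzero at every point of U, with inverse y : V → U (which is then twice continuously differentiable). Define the metric coefficients g₁₁ = ‖∂x/∂ξ₁‖², g₂₂ = ‖∂x/∂ξ₂‖², g₁₂ = ⟨∂x/∂ξ₁, ∂x/∂ξ₂⟩ on U. Then the following are equivalent: (i) both components x₁, x₂ of x satisfy the equations g₂₂ ∂²xᵢ/∂ξ₁² − 2 g₁₂ ∂²xᵢ/∂ξ₁∂ξ₂ + g₁₁ ∂²xᵢ/∂ξ₂² = 0 on U for i = 1, 2; (ii) both components y₁, y₂ of the inverse are harmonic on V, i.e. ∂²y_k/∂x₁² + ∂²y_k/∂x₂² = 0 on V for k = 1, 2. -/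
/-- First partial derivative `∂f/∂ξᵢ` of a scalar function on `ℝ²`. -/
noncomputable def pd (f : (Fin 2 → ℝ) → ℝ) (i : Fin 2) (ξ : Fin 2 → ℝ) : ℝ :=
  fderiv ℝ f ξ (Pi.single i 1)

/-- Second partial derivative `∂²f/∂ξᵢ∂ξⱼ` of a scalar function on `ℝ²`. -/
noncomputable def pd2 (f : (Fin 2 → ℝ) → ℝ) (i j : Fin 2) (ξ : Fin 2 → ℝ) : ℝ :=
  pd (pd f i) j ξ

/-- Metric coefficient `g_{ij} = ⟨∂x/∂ξᵢ, ∂x/∂ξⱼ⟩` of a map `x : ℝ² → ℝ²`. -/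
noncomputable def gmet (x : (Fin 2 → ℝ) → (Fin 2 → ℝ)) (i j : Fin 2)
    (ξ : Fin 2 → ℝ) : ℝ :=
  ∑ k : Fin 2, pd (fun η => x η k) i ξ * pd (fun η => x η k) j ξ

/-- A function on an open subset of `ℝ²` is harmonic if it is twice
continuously differentiable there and its Laplacian vanishes identically. -/
def Harmonic2 (u : (Fin 2 → ℝ) → ℝ) (V : Set (Fin 2 → ℝ)) : Prop :=
  ContDiffOn ℝ 2 u V ∧ ∀ p ∈ V, pd2 u 0 0 p + pd2 u 1 1 p = 0

namespace EGGaux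

abbrev E2 := Fin 2 → ℝ

lemma pd_congr {f g : E2 → ℝ} {ξ : E2} (h : f =ᶠ[nhds ξ] g) (i : Fin 2) :
    pd f i ξ = pd g i ξ := by rw [pd, pd, h.fderiv_eq]

lemma pd_add {a b : E2 → ℝ} {ξ : E2} (ha : DifferentiableAt ℝ a ξ)
    (hb : DifferentiableAt ℝ b ξ) (j : Fin 2) :
    pd (fun ζ => a ζ + b ζ) j ξ = pd a j ξ + pd b j ξ := by
  rw [pd, fderiv_fun_add ha hb]; rfl

lemma pd_mul {a b : E2 → ℝ} {ξ : E2} (ha : DifferentiableAt ℝ a ξ)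
    (hb : DifferentiableAt ℝ b ξ) (j : Fin 2) :
    pd (fun ζ => a ζ * b ζ) j ξ = pd a j ξ * b ξ + a ξ * pd b j ξ := by
  rw [pd, fderiv_fun_mul ha hb]
  simp [pd, smul_eq_mul]; ring

lemma pd_const {c : ℝ} {ξ : E2} (j : Fin 2) : pd (fun _ => c) j ξ = 0 := by
  rw [pd, fderiv_fun_const]; rfl

lemma pd_contDiffAt {f : E2 → ℝ} {p : E2} (hf : ContDiffAt ℝ 2 f p) (i : Fin 2) :
    ContDiffAt ℝ 1 (pd f i) p := by
  have h1 : ContDiffAt ℝ 1 (fderiv ℝ f) p := hf.fderiv_right (by norm_num)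
  exact ((ContinuousLinearMap.apply ℝ ℝ (Pi.single i 1 : E2)).contDiff.contDiffAt).comp p h1

lemma pd2_eq {f : E2 → ℝ} {ξ : E2} (hf : ContDiffAt ℝ 2 f ξ) (i j : Fin 2) :
    pd2 f i j ξ = fderiv ℝ (fderiv ℝ f) ξ (Pi.single j 1) (Pi.single i 1) := by
  have hd : DifferentiableAt ℝ (fderiv ℝ f) ξ :=
    (hf.fderiv_right (m := 1) (by norm_num)).differentiableAt (by norm_num)
  have h0 := (ContinuousLinearMap.apply ℝ ℝ (Pi.single i 1 : E2)).hasFDerivAt.comp ξ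
    hd.hasFDerivAt
  have h : fderiv ℝ (fun ζ => fderiv ℝ f ζ (Pi.single i 1)) ξ
      = (ContinuousLinearMap.apply ℝ ℝ (Pi.single i 1 : E2)).comp
        (fderiv ℝ (fderiv ℝ f) ξ) := h0.fderiv
  show fderiv ℝ (fun ζ => fderiv ℝ f ζ (Pi.single i 1)) ξ (Pi.single j 1) = _
  rw [h]
  rfl

lemma pd2_symm {f : E2 → ℝ} {ξ : E2} (hf : ContDiffAt ℝ 2 f ξ) (i j : Fin 2) :
    pd2 f i j ξ = pd2 f j i ξ := by
  rw [pd2_eq hf, pd2_eq hf, (hf.isSymmSndFDerivAt (by norm_num)).eq]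

lemma pd_proj_apply (x : E2 → E2) (ξ : E2) (hx : DifferentiableAt ℝ x ξ) (m i : Fin 2) :
    pd (fun η => x η m) i ξ = fderiv ℝ x ξ (Pi.single i 1) m := by
  have h0 := (ContinuousLinearMap.proj (R := ℝ) (φ := fun _ : Fin 2 => ℝ)
    m).hasFDerivAt.comp ξ hx.hasFDerivAt
  have h : fderiv ℝ (fun η => x η m) ξ
      = (ContinuousLinearMap.proj (R := ℝ) (φ := fun _ : Fin 2 => ℝ) m).comp (fderiv ℝ x ξ) :=
    h0.fderiv
  rw [pd, h]; rfl

lemma fderiv_eval (w : E2 → ℝ) (p : E2) (v : E2) :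
    fderiv ℝ w p v = ∑ n, v n * pd w n p := by
  have hv : v = ∑ n : Fin 2, v n • (Pi.single n 1 : E2) := by
    ext m; simp [Finset.sum_apply, Pi.single_apply]
  conv_lhs => rw [hv]
  rw [map_sum]
  exact Finset.sum_congr rfl fun n _ => by rw [map_smul]; simp [pd, smul_eq_mul]

lemma pd_comp (w : E2 → ℝ) (x : E2 → E2) (ξ : E2) (hw : DifferentiableAt ℝ w (x ξ))
    (hx : DifferentiableAt ℝ x ξ) (j : Fin 2) :
    pd (fun η => w (x η)) j ξ = ∑ n, pd w n (x ξ) * pd (fun η => x η n) j ξ := by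
  have h : pd (fun η => w (x η)) j ξ = fderiv ℝ w (x ξ) (fderiv ℝ x ξ (Pi.single j 1)) := by
    rw [pd, show (fun η => w (x η)) = w ∘ x from rfl, fderiv_comp ξ hw hx]; rfl
  rw [h, fderiv_eval]
  exact Finset.sum_congr rfl fun n _ => by rw [pd_proj_apply x ξ hx n j, mul_comm]

lemma det_scalar (x : E2 → E2) (ξ : E2) (hx : DifferentiableAt ℝ x ξ) :
    LinearMap.det (fderiv ℝ x ξ).toLinearMap =
      pd (fun η => x η 0) 0 ξ * pd (fun η => x η 1) 1 ξ
        - pd (fun η => x η 0) 1 ξ * pd (fun η => x η 1) 0 ξ := by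
  rw [← LinearMap.det_toMatrix (Pi.basisFun ℝ (Fin 2)), Matrix.det_fin_two]
  simp only [LinearMap.toMatrix_apply, Pi.basisFun_apply, Pi.basisFun_repr,
    ContinuousLinearMap.coe_coe, pd_proj_apply x ξ hx]

lemma inv_contDiffAt (U V : Set E2) (hU : IsOpen U) (hV : IsOpen V)
    (x y : E2 → E2) (hx : ContDiffOn ℝ 2 x U) (hbij : Set.BijOn x U V)
    (hjac : ∀ ξ ∈ U, LinearMap.det (fderiv ℝ x ξ).toLinearMap ≠ 0)
    (hinv : Set.InvOn y x U V) (ξ : E2) (hξ : ξ ∈ U) :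
    ContDiffAt ℝ 2 y (x ξ) := by
  have hCD : ContDiffAt ℝ 2 x ξ := (hx ξ hξ).contDiffAt (hU.mem_nhds hξ)
  have hdet : (fderiv ℝ x ξ).det ≠ 0 := hjac ξ hξ
  set f' := (fderiv ℝ x ξ).toContinuousLinearEquivOfDetNeZero hdet with hf'def
  have hf' : HasFDerivAt x (f' : E2 →L[ℝ] E2) ξ := by
    rw [hf'def, ContinuousLinearMap.coe_toContinuousLinearEquivOfDetNeZero]
    exact (hCD.differentiableAt (by norm_num)).hasFDerivAt
  have hn : (2 : WithTop ℕ∞) ≠ 0 := by norm_num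
  set finv := hCD.localInverse hf' hn with hfinvdef
  have hinvCD : ContDiffAt ℝ 2 finv (x ξ) := hCD.to_localInverse hf' hn
  have hfix : finv (x ξ) = ξ := hCD.localInverse_apply_image hf' hn
  have h1 : ∀ᶠ q in nhds (x ξ), x (finv q) = q :=
    (hCD.hasStrictFDerivAt' hf' hn).eventually_right_inverse
  have hcont : ContinuousAt finv (x ξ) :=
    (hCD.hasStrictFDerivAt' hf' hn).localInverse_continuousAt
  have h2 : ∀ᶠ q in nhds (x ξ), finv q ∈ U := by
    have := hcont.preimage_mem_nhds (hU.mem_nhds (by rw [hfix]; exact hξ))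
    exact this
  have h3 : ∀ᶠ q in nhds (x ξ), q ∈ V := hV.mem_nhds (hbij.mapsTo hξ)
  have heq : y =ᶠ[nhds (x ξ)] finv := by
    filter_upwards [h1, h2, h3] with q hq1 hq2 hq3
    calc y q = y (x (finv q)) := by rw [hq1]
    _ = finv q := hinv.1 hq2
  exact hinvCD.congr_of_eventuallyEq heq

lemma comp_proj_CD {f : E2 → E2} {p : E2} (hf : ContDiffAt ℝ 2 f p) (k : Fin 2) :
    ContDiffAt ℝ 2 (fun q => f q k) p :=
  ((ContinuousLinearMap.proj (R := ℝ) (φ := fun _ : Fin 2 => ℝ) k).contDiff.contDiffAt).comp p hf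

lemma keyA (U : Set E2) (hU : IsOpen U) (x y : E2 → E2)
    (hx : ∀ ζ ∈ U, ContDiffAt ℝ 2 x ζ) (hy : ∀ ζ ∈ U, ContDiffAt ℝ 2 y (x ζ))
    (hyx : ∀ ζ ∈ U, y (x ζ) = ζ) (k : Fin 2) (ξ : E2) (hξ : ξ ∈ U) (i : Fin 2) :
    ∑ m : Fin 2, pd (fun q => y q k) m (x ξ) * pd (fun η => x η m) i ξ
      = (Pi.single i 1 : E2) k := by
  have hyk : DifferentiableAt ℝ (fun q => y q k) (x ξ) :=
    (comp_proj_CD (hy ξ hξ) k).differentiableAt (by norm_num)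
  have hxd : DifferentiableAt ℝ x ξ := (hx ξ hξ).differentiableAt (by norm_num)
  rw [← pd_comp _ x ξ hyk hxd i]
  have he : (fun η => y (x η) k) =ᶠ[nhds ξ] fun η => η k :=
    Filter.eventually_of_mem (hU.mem_nhds hξ) fun ζ hζ =>
      show y (x ζ) k = ζ k by rw [hyx ζ hζ]
  rw [pd_congr he i]
  have hp : fderiv ℝ (fun η : E2 => η k) ξ
      = ContinuousLinearMap.proj (R := ℝ) (φ := fun _ : Fin 2 => ℝ) k :=
    (ContinuousLinearMap.proj (R := ℝ) (φ := fun _ : Fin 2 => ℝ) k).fderiv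
  rw [pd, hp]; rfl

lemma keyB (U : Set E2) (hU : IsOpen U) (x y : E2 → E2)
    (hx : ∀ ζ ∈ U, ContDiffAt ℝ 2 x ζ) (hy : ∀ ζ ∈ U, ContDiffAt ℝ 2 y (x ζ))
    (hyx : ∀ ζ ∈ U, y (x ζ) = ζ) (k : Fin 2) (ξ : E2) (hξ : ξ ∈ U) (i j : Fin 2) :
    (∑ m : Fin 2, (∑ n : Fin 2, pd2 (fun q => y q k) m n (x ξ) * pd (fun η => x η n) j ξ)
        * pd (fun η => x η m) i ξ)
      + ∑ m : Fin 2, pd (fun q => y q k) m (x ξ) * pd2 (fun η => x η m) i j ξ = 0 := by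
  have hxd : DifferentiableAt ℝ x ξ := (hx ξ hξ).differentiableAt (by norm_num)
  have hykCD : ContDiffAt ℝ 2 (fun q => y q k) (x ξ) := comp_proj_CD (hy ξ hξ) k
  set A : Fin 2 → E2 → ℝ := fun m ζ => pd (fun q => y q k) m (x ζ) with hA
  set B : Fin 2 → E2 → ℝ := fun m ζ => pd (fun η => x η m) i ζ with hB
  have hwd : ∀ m, DifferentiableAt ℝ (pd (fun q => y q k) m) (x ξ) :=
    fun m => (pd_contDiffAt hykCD m).differentiableAt (by norm_num)
  have hAd : ∀ m, DifferentiableAt ℝ (A m) ξ := fun m => (hwd m).comp ξ hxd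
  have hBd : ∀ m, DifferentiableAt ℝ (B m) ξ :=
    fun m => (pd_contDiffAt (comp_proj_CD (hx ξ hξ) m) i).differentiableAt (by norm_num)
  have hF : (fun ζ => A 0 ζ * B 0 ζ + A 1 ζ * B 1 ζ) =ᶠ[nhds ξ]
      fun _ => (Pi.single i 1 : E2) k := by
    refine Filter.eventually_of_mem (hU.mem_nhds hξ) fun ζ hζ => ?_
    have := keyA U hU x y hx hy hyx k ζ hζ i
    rw [Fin.sum_univ_two] at this
    exact this
  have hpdF : pd (fun ζ => A 0 ζ * B 0 ζ + A 1 ζ * B 1 ζ) j ξ = 0 := by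
    rw [pd_congr hF j, pd_const]
  rw [pd_add (a := fun ζ => A 0 ζ * B 0 ζ) (b := fun ζ => A 1 ζ * B 1 ζ) ((hAd 0).mul (hBd 0)) ((hAd 1).mul (hBd 1)) j,
      pd_mul (hAd 0) (hBd 0) j, pd_mul (hAd 1) (hBd 1) j] at hpdF
  have hpdA : ∀ m, pd (A m) j ξ
      = ∑ n : Fin 2, pd2 (fun q => y q k) m n (x ξ) * pd (fun η => x η n) j ξ :=
    fun m => pd_comp (pd (fun q => y q k) m) x ξ (hwd m) hxd j
  rw [hpdA 0, hpdA 1] at hpdF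
  simp only [Fin.sum_univ_two]
  have hBpd : ∀ m, pd (B m) j ξ = pd2 (fun η => x η m) i j ξ := fun m => rfl
  rw [hBpd 0, hBpd 1] at hpdF
  simp only [Fin.sum_univ_two] at hpdF
  have hAv : ∀ m, A m ξ = pd (fun q => y q k) m (x ξ) := fun m => rfl
  have hBv : ∀ m, B m ξ = pd (fun η => x η m) i ξ := fun m => rfl
  rw [hAv 0, hAv 1, hBv 0, hBv 1] at hpdF
  linarith [hpdF]

end EGGaux

open EGGaux
/-- The elliptic-grid-generation equations (paper eq. (7)): a bijective `C²`
map `x : U → V` with nowhere-vanishing Jacobian determinant satisfies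
`g₂₂ ∂²xᵢ/∂ξ₁² − 2 g₁₂ ∂²xᵢ/∂ξ₁∂ξ₂ + g₁₁ ∂²xᵢ/∂ξ₂² = 0` for both components
if and only if both components of its inverse are harmonic on `V`. -/
theorem stmt3 (U V : Set (Fin 2 → ℝ)) (hU : IsOpen U) (hV : IsOpen V)
    (x y : (Fin 2 → ℝ) → (Fin 2 → ℝ))
    (hx : ContDiffOn ℝ 2 x U)
    (hbij : Set.BijOn x U V)
    (hjac : ∀ ξ ∈ U, LinearMap.det (fderiv ℝ x ξ).toLinearMap ≠ 0)
    (hinv : Set.InvOn y x U V) :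
    (∀ ξ ∈ U, ∀ i : Fin 2,
        gmet x 1 1 ξ * pd2 (fun η => x η i) 0 0 ξ
          - 2 * gmet x 0 1 ξ * pd2 (fun η => x η i) 0 1 ξ
          + gmet x 0 0 ξ * pd2 (fun η => x η i) 1 1 ξ = 0)
      ↔ (∀ k : Fin 2, Harmonic2 (fun p => y p k) V) := by
  have hxyV : ∀ p ∈ V, x (y p) = p := fun p hp => hinv.2 hp
  have hyU : ∀ p ∈ V, y p ∈ U := by
    intro p hp
    obtain ⟨ξ, hξ, rfl⟩ := hbij.surjOn hp
    rw [hinv.1 hξ]; exact hξ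
  have hxCD : ∀ ζ ∈ U, ContDiffAt ℝ 2 x ζ := fun ζ hζ => (hx ζ hζ).contDiffAt (hU.mem_nhds hζ)
  have hyCD : ∀ ζ ∈ U, ContDiffAt ℝ 2 y (x ζ) :=
    fun ζ hζ => inv_contDiffAt U V hU hV x y hx hbij hjac hinv ζ hζ
  have hyxU : ∀ ζ ∈ U, y (x ζ) = ζ := fun ζ hζ => hinv.1 hζ
  have hg : ∀ (i j : Fin 2) (ζ : Fin 2 → ℝ), gmet x i j ζ
      = pd (fun η => x η 0) i ζ * pd (fun η => x η 0) j ζ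
        + pd (fun η => x η 1) i ζ * pd (fun η => x η 1) j ζ :=
    fun i j ζ => by rw [gmet, Fin.sum_univ_two]
  -- the pointwise bridge identity
  have bridge : ∀ ξ ∈ U, ∀ k : Fin 2,
      (pd (fun η => x η 0) 0 ξ * pd (fun η => x η 1) 1 ξ
          - pd (fun η => x η 0) 1 ξ * pd (fun η => x η 1) 0 ξ) ^ 2
        * (pd2 (fun q => y q k) 0 0 (x ξ) + pd2 (fun q => y q k) 1 1 (x ξ))
      + pd (fun q => y q k) 0 (x ξ)
        * (gmet x 1 1 ξ * pd2 (fun η => x η 0) 0 0 ξ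
            - 2 * gmet x 0 1 ξ * pd2 (fun η => x η 0) 0 1 ξ
            + gmet x 0 0 ξ * pd2 (fun η => x η 0) 1 1 ξ)
      + pd (fun q => y q k) 1 (x ξ)
        * (gmet x 1 1 ξ * pd2 (fun η => x η 1) 0 0 ξ
            - 2 * gmet x 0 1 ξ * pd2 (fun η => x η 1) 0 1 ξ
            + gmet x 0 0 ξ * pd2 (fun η => x η 1) 1 1 ξ) = 0 := by
    intro ξ hξ k
    have Q := fun (i j : Fin 2) => keyB U hU x y hxCD hyCD hyxU k ξ hξ i j
    have Q00 := Q 0 0; have Q01 := Q 0 1; have Q10 := Q 1 0; have Q11 := Q 1 1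
    simp only [Fin.sum_univ_two] at Q00 Q01 Q10 Q11
    have hS0 : pd2 (fun η => x η 0) 0 1 ξ = pd2 (fun η => x η 0) 1 0 ξ :=
      pd2_symm (comp_proj_CD (hxCD ξ hξ) 0) 0 1
    have hS1 : pd2 (fun η => x η 1) 0 1 ξ = pd2 (fun η => x η 1) 1 0 ξ :=
      pd2_symm (comp_proj_CD (hxCD ξ hξ) 1) 0 1
    rw [hg 1 1 ξ, hg 0 1 ξ, hg 0 0 ξ]
    set J00 := pd (fun η => x η 0) 0 ξ
    set J01 := pd (fun η => x η 0) 1 ξ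
    set J10 := pd (fun η => x η 1) 0 ξ
    set J11 := pd (fun η => x η 1) 1 ξ
    set K0 := pd (fun q => y q k) 0 (x ξ)
    set K1 := pd (fun q => y q k) 1 (x ξ)
    linear_combination (J01 * J01 + J11 * J11) * Q00
      - (J00 * J01 + J10 * J11) * Q01 - (J00 * J01 + J10 * J11) * Q10
      + (J00 * J00 + J10 * J10) * Q11
      - (J00 * J01 + J10 * J11) * K0 * hS0 - (J00 * J01 + J10 * J11) * K1 * hS1
  constructor
  · -- grid equations ⇒ harmonic inverse
    intro hgrid k
    constructor
    · intro p hp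
      have h0 : ContDiffAt ℝ 2 (fun q => y q k) (x (y p)) :=
        comp_proj_CD (hyCD (y p) (hyU p hp)) k
      rw [hxyV p hp] at h0
      exact h0.contDiffWithinAt
    · intro p hp
      have hξ : y p ∈ U := hyU p hp
      have hb := bridge (y p) hξ k
      rw [hgrid (y p) hξ 0, hgrid (y p) hξ 1] at hb
      have hdetJ : pd (fun η => x η 0) 0 (y p) * pd (fun η => x η 1) 1 (y p)
          - pd (fun η => x η 0) 1 (y p) * pd (fun η => x η 1) 0 (y p) ≠ 0 := by
        rw [← det_scalar x (y p) ((hxCD (y p) hξ).differentiableAt (by norm_num))]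
        exact hjac (y p) hξ
      have h2 : (pd (fun η => x η 0) 0 (y p) * pd (fun η => x η 1) 1 (y p)
          - pd (fun η => x η 0) 1 (y p) * pd (fun η => x η 1) 0 (y p)) ^ 2
          * (pd2 (fun q => y q k) 0 0 (x (y p)) + pd2 (fun q => y q k) 1 1 (x (y p))) = 0 := by
        linarith [hb]
      rcases mul_eq_zero.mp h2 with h | h
      · exact absurd h (pow_ne_zero 2 hdetJ)
      · rw [hxyV p hp] at h
        exact h
  · -- harmonic inverse ⇒ grid equations
    intro hharm ξ hξ i
    have hA := fun (k i : Fin 2) => keyA U hU x y hxCD hyCD hyxU k ξ hξ i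
    have a00 := hA 0 0; have a01 := hA 0 1; have a10 := hA 1 0; have a11 := hA 1 1
    simp only [Fin.sum_univ_two, Pi.single_eq_same, Pi.single_eq_of_ne (by decide : (0:Fin 2) ≠ 1),
      Pi.single_eq_of_ne (by decide : (1:Fin 2) ≠ 0)] at a00 a01 a10 a11
    have hlap : ∀ k : Fin 2,
        pd2 (fun q => y q k) 0 0 (x ξ) + pd2 (fun q => y q k) 1 1 (x ξ) = 0 := by
      intro k
      exact (hharm k).2 (x ξ) (hbij.mapsTo hξ)
    have hb := fun k : Fin 2 => bridge ξ hξ k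
    have e0 := hb 0; have e1 := hb 1
    rw [hlap 0, mul_zero, zero_add] at e0
    rw [hlap 1, mul_zero, zero_add] at e1
    set E0 := gmet x 1 1 ξ * pd2 (fun η => x η 0) 0 0 ξ
      - 2 * gmet x 0 1 ξ * pd2 (fun η => x η 0) 0 1 ξ
      + gmet x 0 0 ξ * pd2 (fun η => x η 0) 1 1 ξ with hE0
    set E1 := gmet x 1 1 ξ * pd2 (fun η => x η 1) 0 0 ξ
      - 2 * gmet x 0 1 ξ * pd2 (fun η => x η 1) 0 1 ξ
      + gmet x 0 0 ξ * pd2 (fun η => x η 1) 1 1 ξ with hE1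
    set K00 := pd (fun q => y q 0) 0 (x ξ)
    set K01 := pd (fun q => y q 0) 1 (x ξ)
    set K10 := pd (fun q => y q 1) 0 (x ξ)
    set K11 := pd (fun q => y q 1) 1 (x ξ)
    set J00 := pd (fun η => x η 0) 0 ξ
    set J01 := pd (fun η => x η 0) 1 ξ
    set J10 := pd (fun η => x η 1) 0 ξ
    set J11 := pd (fun η => x η 1) 1 ξ
    -- e0 : K00 * E0 + K01 * E1 = 0 ; e1 : K10 * E0 + K11 * E1 = 0
    -- a's : K ⋅ J = I
    have hD : (K00 * K11 - K01 * K10) * (J00 * J11 - J01 * J10) = 1 := by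
      linear_combination (K10 * J01 + K11 * J11) * a00 + a11 - (K00 * J01 + K01 * J11) * a10
    have hDne : K00 * K11 - K01 * K10 ≠ 0 := by
      intro h
      rw [h, zero_mul] at hD
      norm_num at hD
    have hE0z : E0 = 0 := by
      have h : (K00 * K11 - K01 * K10) * E0 = 0 := by
        linear_combination K11 * e0 - K01 * e1
      exact (mul_eq_zero.mp h).resolve_left hDne
    have hE1z : E1 = 0 := by
      have h : (K00 * K11 - K01 * K10) * E1 = 0 := by
        linear_combination K00 * e1 - K10 * e0
      exact (mul_eq_zero.mp h).resolve_left hDne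
    fin_cases i
    · exact hE0z
    · exact hE1z
end
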